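/- Let N be a numbering (bijective filling by 1,...,n) of a Young diagram λ with at most 3 columns, and define φ_N(i,j) = 1 if i and j lie in the same column of N and 0 otherwise (with φ_N(i,i)=0, φ_N symmetric). Then for any four distinct indices m,i,j,k in {1,...,n}, the symmetrized expression g(i,j,k) = -φ(m,i)φ(m,j)φ(m,k) + 1/6 - (1/6)(φ(m,i)+φ(m,j)+φ(m,k)+φ(i,j)+φ(i,k)+φ(j,k)) + (1/6)(φ(m,i)φ(j,k)+φ(m,j)φ(i,k)+φ(m,k)φ(i,j)) + (1/3)(φ(m,i)φ(m,j)+φ(m,i)φ(m,k)+φ(m,j)φ(m,k)) + (1/9)(φ(i,j)φ(i,k)+φ(j,i)φ(j,k)+φ(k,i)φ(k,j)) equals zero, where φ = φ_N. -/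
import Mathlib


open Finset

/-- let `N` be a numbering of a Young diagram with at most 3 columns, encoded by
the bijection `ent : {1,…,n} → cells of μ` giving the position of each entry, and let
`φ a b = 1` if `a ≠ b` lie in the same column and `0` otherwise.  Then for any four pairwise
distinct entries `m i j k`, the symmetrized expression `g(i,j,k)` vanishes. -/
theorem specht_g_vanishes
    (n : ℕ) (μ : YoungDiagram)
    (hcol : ∀ c ∈ μ.cells, c.2 < 3)
    (hn : μ.cells.card = n)
    (ent : ℕ → ℕ × ℕ)
    (hent : Set.BijOn ent ↑(Finset.Icc 1 n) ↑μ.cells)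
    (φ : ℕ → ℕ → ℚ)
    (hφ : ∀ a b, φ a b = if a ≠ b ∧ (ent a).2 = (ent b).2 then 1 else 0)
    (m i j k : ℕ)
    (hm : m ∈ Finset.Icc 1 n) (hi : i ∈ Finset.Icc 1 n)
    (hj : j ∈ Finset.Icc 1 n) (hk : k ∈ Finset.Icc 1 n)
    (hmi : m ≠ i) (hmj : m ≠ j) (hmk : m ≠ k)
    (hij : i ≠ j) (hik : i ≠ k) (hjk : j ≠ k) :
    -(φ m i * φ m j * φ m k) + 1/6
      - (1/6) * (φ m i + φ m j + φ m k + φ i j + φ i k + φ j k)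
      + (1/6) * (φ m i * φ j k + φ m j * φ i k + φ m k * φ i j)
      + (1/3) * (φ m i * φ m j + φ m i * φ m k + φ m j * φ m k)
      + (1/9) * (φ i j * φ i k + φ j i * φ j k + φ k i * φ k j) = 0 := by
  have hcm : (ent m).2 < 3 := hcol _ (hent.mapsTo hm)
  have hci : (ent i).2 < 3 := hcol _ (hent.mapsTo hi)
  have hcj : (ent j).2 < 3 := hcol _ (hent.mapsTo hj)
  have hck : (ent k).2 < 3 := hcol _ (hent.mapsTo hk)
  have e1 : φ m i = if (ent m).2 = (ent i).2 then 1 else 0 := by rw [hφ]; simp [hmi]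
  have e2 : φ m j = if (ent m).2 = (ent j).2 then 1 else 0 := by rw [hφ]; simp [hmj]
  have e3 : φ m k = if (ent m).2 = (ent k).2 then 1 else 0 := by rw [hφ]; simp [hmk]
  have e4 : φ i j = if (ent i).2 = (ent j).2 then 1 else 0 := by rw [hφ]; simp [hij]
  have e5 : φ i k = if (ent i).2 = (ent k).2 then 1 else 0 := by rw [hφ]; simp [hik]
  have e6 : φ j k = if (ent j).2 = (ent k).2 then 1 else 0 := by rw [hφ]; simp [hjk]
  have e7 : φ j i = if (ent j).2 = (ent i).2 then 1 else 0 := by rw [hφ]; simp [hij.symm]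
  have e8 : φ k i = if (ent k).2 = (ent i).2 then 1 else 0 := by rw [hφ]; simp [hik.symm]
  have e9 : φ k j = if (ent k).2 = (ent j).2 then 1 else 0 := by rw [hφ]; simp [hjk.symm]
  rw [e1, e2, e3, e4, e5, e6, e7, e8, e9]
  set a := (ent m).2 with ha
  set b := (ent i).2 with hb
  set c := (ent j).2 with hc
  set d := (ent k).2 with hd
  clear_value a b c d
  clear ha hb hc hd e1 e2 e3 e4 e5 e6 e7 e8 e9
  interval_cases a <;> interval_cases b <;> interval_cases c <;> interval_cases d <;> norm_num
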